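/- Let s ≥ 1 be an integer, let Δ ∈ (0, 1/6], let φ = min(2π/s, π/3), and let a = 2Δ·(cos(π/s), sin(π/s)). Then the drawing hull H(a, (1,0), φ, Δ) is contained in the first cone C^(1). -/

import Mathlib

open Real Set

/-- Map an angle in `(-π, π]` (as returned by `Complex.arg`) to `[0, 2π)`. -/
noncomputable def toCCW (θ : ℝ) : ℝ := if 0 ≤ θ then θ else θ + 2 * Real.pi

/-- The counterclockwise angle from `w` to `z` (as vectors in `ℝ² = ℂ`), in `[0, 2π)`. -/
noncomputable def ccwAngle (w z : ℂ) : ℝ := toCCW ((z / w).arg)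

/-- The drawing hull `H(a, d, φ, Δ)`: all points within distance `Δ` of the anchor `a`
whose counterclockwise angle (measured from direction `d`) lies in `[0, φ)`,
together with the anchor itself. -/
noncomputable def dhull (a d : ℂ) (φ Δ : ℝ) : Set ℂ :=
  {a} ∪ {x : ℂ | dist x a ≤ Δ ∧ ccwAngle d (x - a) ∈ Set.Ico 0 φ}

/-- The `i`-th cone `C^(i)` (for symmetricity `s`): nonzero points whose counterclockwise
angle from `(1, 0)` lies in `[(i-1)·2π/s, i·2π/s)`. -/
noncomputable def dcone (s i : ℕ) : Set ℂ :=
  {p : ℂ | p ≠ 0 ∧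
    ccwAngle 1 p ∈ Set.Ico (((i : ℝ) - 1) * (2 * Real.pi / s)) ((i : ℝ) * (2 * Real.pi / s))}

/-- Key identity: `sin β * re v - cos β * im v = |v| * sin (β - arg v)`. -/
lemma key_id (v : ℂ) (β : ℝ) :
    Real.sin β * v.re - Real.cos β * v.im = ‖v‖ * Real.sin (β - v.arg) := by
  rcases eq_or_ne v 0 with rfl | hv
  · simp
  · have habs : ‖v‖ ≠ 0 := by simpa using hv
    rw [Real.sin_sub, Complex.cos_arg hv, Complex.sin_arg]
    field_simp

/-- If `sin β * re x - cos β * im x > 0`, `0 ≤ im x`, `0 < β ≤ π`, then `arg x < β`. -/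
lemma arg_lt_of_pos (x : ℂ) (β : ℝ) (hβ0 : 0 ≤ β) (hβπ : β ≤ π)
    (hK : 0 < Real.sin β * x.re - Real.cos β * x.im) : x.arg < β := by
  by_contra h
  push_neg at h
  rw [key_id] at hK
  have h1 : β - x.arg ≤ 0 := by linarith
  have h2 : -π ≤ β - x.arg := by
    have := Complex.arg_le_pi x
    linarith
  have := Real.sin_nonpos_of_nonpos_of_neg_pi_le h1 h2
  nlinarith [norm_nonneg x]

set_option maxHeartbeats 1000000 in
theorem initial_hull_in_first_cone (s : ℕ) (hs : 1 ≤ s) (Δ : ℝ)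
    (hΔ : Δ ∈ Set.Ioc (0 : ℝ) (1 / 6))
    (φ : ℝ) (hφ : φ = min (2 * π / s) (π / 3))
    (a : ℂ) (ha : a = (⟨2 * Δ * Real.cos (π / s), 2 * Δ * Real.sin (π / s)⟩ : ℂ)) :
    dhull a 1 φ Δ ⊆ dcone s 1 := by
  obtain ⟨hΔ0, hΔ6⟩ := hΔ
  have hπ := Real.pi_pos
  have hs1 : (1 : ℝ) ≤ s := by exact_mod_cast hs
  have hs0 : (0 : ℝ) < s := by linarith
  have hπs0 : 0 < π / s := div_pos hπ hs0
  have hπsπ : π / s ≤ π := by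
    rw [div_le_iff₀ hs0]; nlinarith
  have hφ0 : 0 < φ := by
    rw [hφ]; exact lt_min (by positivity) (by positivity)
  have hφ3 : φ ≤ π / 3 := by rw [hφ]; exact min_le_right _ _
  have hφβ : φ ≤ 2 * π / s := by rw [hφ]; exact min_le_left _ _
  have hare : a.re = 2 * Δ * Real.cos (π / s) := by rw [ha]
  have haim : a.im = 2 * Δ * Real.sin (π / s) := by rw [ha]
  have hsin_nonneg : 0 ≤ Real.sin (π / s) :=
    Real.sin_nonneg_of_nonneg_of_le_pi hπs0.le hπsπ
  have habs_a : ‖a‖ = 2 * Δ := by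
    rw [Complex.norm_def, Complex.normSq_apply, hare, haim]
    rw [show 2 * Δ * Real.cos (π / s) * (2 * Δ * Real.cos (π / s)) +
        2 * Δ * Real.sin (π / s) * (2 * Δ * Real.sin (π / s)) =
        (2 * Δ) ^ 2 * (Real.sin (π / s) ^ 2 + Real.cos (π / s) ^ 2) by ring,
      Real.sin_sq_add_cos_sq, mul_one]
    rw [Real.sqrt_sq (by linarith)]
  -- main argument
  intro x hx
  have key : dist x a ≤ Δ ∧ ccwAngle 1 (x - a) ∈ Set.Ico 0 φ := by
    rcases hx with hx | hx
    · rcases hx with rfl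
      refine ⟨by simp [hΔ0.le], ?_⟩
      simp [ccwAngle, toCCW, Complex.arg_zero, hφ0]
    · exact hx
  obtain ⟨hd, hang⟩ := key
  set v : ℂ := x - a with hv
  -- arg v ∈ [0, φ)
  have hccw : ccwAngle 1 v = toCCW v.arg := by
    simp [ccwAngle]
  rw [hccw] at hang
  have harg : v.arg ∈ Set.Ico 0 φ := by
    by_cases h0 : 0 ≤ v.arg
    · simpa [toCCW, h0] using hang
    · exfalso
      push_neg at h0
      have := Complex.neg_pi_lt_arg v
      have h2 : toCCW v.arg = v.arg + 2 * π := by simp [toCCW, not_le.mpr h0]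
      rw [h2] at hang
      have := hang.2
      nlinarith
  have hvabs : ‖v‖ ≤ Δ := by
    rwa [Complex.dist_eq] at hd
  have hvim : 0 ≤ v.im := Complex.arg_nonneg_iff.mp harg.1
  have hxabs : Δ ≤ ‖x‖ := by
    have h2 := norm_add_le x (a - x)
    have h3 : ‖a - x‖ = ‖v‖ := by
      rw [hv]; exact norm_sub_rev a x
    have h4 : x + (a - x) = a := by ring
    rw [h4, h3, habs_a] at h2
    linarith
  have hx0 : x ≠ 0 := by
    intro h
    rw [h] at hxabs
    simp at hxabs
    linarith
  -- membership in the cone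
  refine ⟨hx0, ?_⟩
  have hccwx : ccwAngle 1 x = toCCW x.arg := by simp [ccwAngle]
  rw [hccwx]
  have hsimp : ((1 : ℕ) : ℝ) - 1 = 0 := by norm_num
  constructor
  · rw [hsimp, zero_mul]
    unfold toCCW
    split
    · assumption
    · linarith [Complex.neg_pi_lt_arg x, Real.pi_pos]
  · rw [Nat.cast_one, one_mul]
    -- goal : toCCW x.arg < 2 * π / s
    rcases eq_or_lt_of_le hs1 with hs1' | hs2
    · -- s = 1
      have hss : (s : ℝ) = 1 := hs1'.symm
      rw [hss, div_one]
      unfold toCCW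
      split
      · linarith [Complex.arg_le_pi x]
      · next hneg => push_neg at hneg; linarith
    · -- s ≥ 2, so sin(π/s) > 0 and im x > 0
      have hs2' : (2 : ℝ) ≤ s := by
        have : 2 ≤ s := by exact_mod_cast (by exact_mod_cast hs2 : (1:ℝ) < s)
        exact_mod_cast this
      have hπsπ' : π / s < π := by
        rw [div_lt_iff₀ hs0]; nlinarith
      have hsinpos : 0 < Real.sin (π / s) :=
        Real.sin_pos_of_pos_of_lt_pi hπs0 hπsπ'
      have hximpos : 0 < x.im := by
        have hx_eq : x = a + v := by rw [hv]; ring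
        rw [hx_eq, Complex.add_im, haim]
        nlinarith
      have hargx0 : 0 ≤ x.arg := Complex.arg_nonneg_iff.mpr hximpos.le
      have htoc : toCCW x.arg = x.arg := by simp [toCCW, hargx0]
      rw [htoc]
      rcases eq_or_lt_of_le hs2' with hs2'' | hs3
    -- s = 2 case
      · have hss : (s : ℝ) = 2 := hs2''.symm
        rw [hss]
        rw [show 2 * π / 2 = π by ring]
        rcases lt_or_eq_of_le (Complex.arg_le_pi x) with h | h
        · exact h
        · exfalso
          have := Complex.arg_eq_pi_iff.mp h
          linarith [this.2]
      · -- s ≥ 3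
        have hs3' : (3 : ℝ) ≤ s := by
          have : 3 ≤ s := by exact_mod_cast (by exact_mod_cast hs3 : (2:ℝ) < s)
          exact_mod_cast this
        set β : ℝ := 2 * π / s with hβ
        have hβpos : 0 < β := by positivity
        have hβle : β ≤ 2 * π / 3 := by
          rw [hβ, div_le_div_iff₀ hs0 (by norm_num : (0:ℝ) < 3)]
          nlinarith [hπ, hs3']
        have hβπ : β ≤ π := by linarith
        apply arg_lt_of_pos x β hβpos.le hβπ
        have hx_eq : x = a + v := by rw [hv]; ring
        rw [hx_eq, Complex.add_re, Complex.add_im]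
        have hKa : Real.sin β * a.re - Real.cos β * a.im = 2 * Δ * Real.sin (π / s) := by
          have h := Real.sin_sub β (π / s)
          rw [show β - π / s = π / s by rw [hβ]; ring] at h
          rw [hare, haim]
          linear_combination (-(2 * Δ)) * h
        have hKv : 0 ≤ Real.sin β * v.re - Real.cos β * v.im := by
          rw [key_id]
          apply mul_nonneg (norm_nonneg _)
          apply Real.sin_nonneg_of_nonneg_of_le_pi
          · have := harg.2; linarith
          · have := harg.1; linarith
        nlinarith
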